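/- Let v_i = v_i^r + j·v_i^i and v_j = v_j^r + j·v_j^i be complex voltages, let y = g + jb and Y = G + jB be admittances with real g, b, G, B, and define the W-model variables W^d_i = (v_i^r)² + (v_i^i)², W^d_j = (v_j^r)² + (v_j^i)², W^r_{ij} = v_i^r·v_j^r + v_i^i·v_j^i, W^i_{ij} = v_i^r·v_j^i − v_i^i·v_j^r. Then the squared branch current magnitude satisfies |y·v_i + Y·v_j|² = 2·(g·G + b·B)·W^r_{ij} + 2·(b·G − g·B)·W^i_{ij} + |y|²·W^d_i + |Y|²·W^d_j. Consequently the current thermal limit |y·v_i + Y·v_j| ≤ I^{Max} is equivalent to the linear-in-W inequality 2·(g·G + b·B)·W^r_{ij} + 2·(b·G − g·B)·W^i_{ij} + |y|²·W^d_i + |Y|²·W^d_j ≤ (I^{Max})². (W-model statement of the current thermal limit in the nodal injection formulation NIRAW.) -/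

import Mathlib

/-- W-model statement of the current thermal limit in the nodal injection
formulation NIRAW. -/
theorem current_thermal_limit_W_model
    (vir vii vjr vji g b G B : ℝ)
    (vi vj y Y : ℂ)
    (hvi : vi = (vir : ℂ) + (vii : ℂ) * Complex.I)
    (hvj : vj = (vjr : ℂ) + (vji : ℂ) * Complex.I)
    (hy : y = (g : ℂ) + (b : ℂ) * Complex.I)
    (hY : Y = (G : ℂ) + (B : ℂ) * Complex.I)
    (Wdi Wdj Wr Wi : ℝ)
    (hWdi : Wdi = vir ^ 2 + vii ^ 2)
    (hWdj : Wdj = vjr ^ 2 + vji ^ 2)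
    (hWr : Wr = vir * vjr + vii * vji)
    (hWi : Wi = vir * vji - vii * vjr)
    (IMax : ℝ) (hIMax : 0 < IMax) :
    ‖y * vi + Y * vj‖ ^ 2
      = 2 * (g * G + b * B) * Wr + 2 * (b * G - g * B) * Wi
        + ‖y‖ ^ 2 * Wdi + ‖Y‖ ^ 2 * Wdj ∧
    (‖y * vi + Y * vj‖ ≤ IMax ↔
      2 * (g * G + b * B) * Wr + 2 * (b * G - g * B) * Wi
        + ‖y‖ ^ 2 * Wdi + ‖Y‖ ^ 2 * Wdj
        ≤ IMax ^ 2) := by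
  have key : ‖y * vi + Y * vj‖ ^ 2
      = 2 * (g * G + b * B) * Wr + 2 * (b * G - g * B) * Wi
        + ‖y‖ ^ 2 * Wdi + ‖Y‖ ^ 2 * Wdj := by
    rw [Complex.sq_norm, Complex.sq_norm, Complex.sq_norm]
    subst hvi hvj hy hY hWdi hWdj hWr hWi
    simp [Complex.normSq_apply]
    ring
  refine ⟨key, ?_⟩
  rw [← key]
  exact (pow_le_pow_iff_left₀ (norm_nonneg _) hIMax.le two_ne_zero).symm
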